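/- For any complex sequence {a(n)} and any X ≥ 2, one has ∑_{p,q primes, X^{1/4} < p,q ≤ X, p ≠ q} pq · |∑_{n ≤ X, pq | n} a(n) − (pq)^{-1} ∑_{n ≤ X} a(n)|² ≪ X ∑_{n ≤ X} |a(n)|², with an absolute implied constant. -/

import Mathlib

open Finset

/-- The set of prime powers `p^k ≤ Y` (as natural numbers `≥ 2`). -/
noncomputable def ppows (Y : ℝ) : Finset ℕ :=
  (Finset.Icc 2 ⌊Y⌋₊).filter IsPrimePow

/-- `A_g(Y) = ∑_{p^k ≤ Y} g(p^k) p^{-k} (1 - 1/p)`. -/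
noncomputable def Ag (g : ℕ → ℂ) (Y : ℝ) : ℂ :=
  ∑ q ∈ ppows Y, g q * (1 / (q : ℂ)) * (1 - 1 / ((q.minFac : ℂ)))

/-- `B_g(Y) = (∑_{p^k ≤ Y} |g(p^k)|² p^{-k})^{1/2}`. -/
noncomputable def Bg (g : ℕ → ℂ) (Y : ℝ) : ℝ :=
  Real.sqrt (∑ q ∈ ppows Y, ‖g q‖ ^ 2 / (q : ℝ))

/-- `g` is additive: `g(mn) = g(m) + g(n)` whenever `gcd(m,n) = 1`. -/
def IsAdditive (g : ℕ → ℂ) : Prop :=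
  ∀ m n : ℕ, Nat.Coprime m n → g (m * n) = g m + g n



-- Chebyshev: sum of log p over primes <= N
lemma theta_bd (N : ℕ) :
    ∑ p ∈ (range (N+1)).filter Nat.Prime, Real.log p ≤ N * Real.log 4 := by
  have h1 : (primorial N : ℝ) ≤ (4:ℝ) ^ N := by
    exact_mod_cast primorial_le_4_pow N
  have h2 : Real.log (primorial N) ≤ N * Real.log 4 := by
    calc Real.log (primorial N) ≤ Real.log ((4:ℝ)^N) :=
          Real.log_le_log (by exact_mod_cast primorial_pos N) h1
      _ = N * Real.log 4 := by rw [Real.log_pow]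
  have h3 : Real.log (primorial N) = ∑ p ∈ (range (N+1)).filter Nat.Prime, Real.log p := by
    unfold primorial
    push_cast
    rw [Real.log_prod]
    intro p hp
    have := (mem_filter.mp hp).2.pos
    positivity
  linarith [h3 ▸ h2]

lemma tel (p N : ℕ) (h : p ≤ N) : ∑ m ∈ Ico p N, ((1:ℝ)/m - 1/(m+1)) = 1/p - 1/N := by
  induction N, h using Nat.le_induction with
  | base => simp
  | succ n hn ih => rw [Finset.sum_Ico_succ_top hn, ih]; push_cast; ring

lemma logpp_bd (N : ℕ) (hN : 1 ≤ N) :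
    ∑ p ∈ (range (N+1)).filter Nat.Prime, Real.log p / p
      ≤ Real.log 4 * (2 + Real.log N) := by
  set A := (range (N+1)).filter Nat.Prime with hA
  have hmem : ∀ p ∈ A, 2 ≤ p ∧ p ≤ N := by
    intro p hp
    rw [hA, mem_filter, mem_range] at hp
    exact ⟨hp.2.two_le, by omega⟩
  have step1 : ∑ p ∈ A, Real.log p / p
      = (∑ p ∈ A, Real.log p) / N
        + ∑ p ∈ A, ∑ m ∈ range N, (if p ≤ m then Real.log p * ((1:ℝ)/m - 1/(m+1)) else 0) := by
    rw [Finset.sum_div, ← Finset.sum_add_distrib]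
    refine Finset.sum_congr rfl fun p hp => ?_
    obtain ⟨h2, hle⟩ := hmem p hp
    have hIco : Ico p N = (range N).filter (fun m => p ≤ m) := by
      ext m; simp [Finset.mem_Ico, Finset.mem_filter, and_comm]
    have : ∑ m ∈ range N, (if p ≤ m then Real.log p * ((1:ℝ)/m - 1/(m+1)) else 0)
        = ∑ m ∈ Ico p N, Real.log p * ((1:ℝ)/m - 1/(m+1)) := by
      rw [hIco, Finset.sum_filter]
    rw [this, ← Finset.mul_sum, tel p N hle]
    have hp0 : (0:ℝ) < p := by positivity
    have hN0 : (0:ℝ) < N := by positivity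
    field_simp
    ring
  have part1 : (∑ p ∈ A, Real.log p) / N ≤ Real.log 4 := by
    rw [div_le_iff₀ (by positivity)]
    calc ∑ p ∈ A, Real.log p ≤ N * Real.log 4 := theta_bd N
      _ = Real.log 4 * N := by ring
  have part2 : ∑ p ∈ A, ∑ m ∈ range N, (if p ≤ m then Real.log p * ((1:ℝ)/m - 1/(m+1)) else 0)
      ≤ Real.log 4 * (1 + Real.log N) := by
    rw [Finset.sum_comm]
    have hterm : ∀ m ∈ range N,
        ∑ p ∈ A, (if p ≤ m then Real.log p * ((1:ℝ)/m - 1/(m+1)) else 0)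
          ≤ Real.log 4 * (1/(m+1)) := by
      intro m hm
      rw [mem_range] at hm
      have hsplit : ∑ p ∈ A, (if p ≤ m then Real.log p * ((1:ℝ)/m - 1/(m+1)) else 0)
          = (∑ p ∈ (range (m+1)).filter Nat.Prime, Real.log p) * ((1:ℝ)/m - 1/(m+1)) := by
        rw [← Finset.sum_filter, ← Finset.sum_mul]
        congr 1
        apply Finset.sum_congr _ (fun _ _ => rfl)
        ext p
        simp only [hA, mem_filter, mem_range]
        constructor
        · rintro ⟨⟨_, hp⟩, hpm⟩; exact ⟨by omega, hp⟩
        · rintro ⟨hpm, hp⟩; exact ⟨⟨by omega, hp⟩, by omega⟩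
      rw [hsplit]
      rcases Nat.eq_zero_or_pos m with rfl | hm1
      · simp [Finset.filter_singleton, Nat.not_prime_zero,
          Real.log_nonneg (by norm_num : (1:ℝ) ≤ 4)]
      · have hg : (0:ℝ) ≤ 1/m - 1/(m+1) := by
          have h1 : (0:ℝ) < m := by positivity
          rw [sub_nonneg, div_le_div_iff₀ (by positivity) h1]
          push_cast; nlinarith
        calc (∑ p ∈ (range (m+1)).filter Nat.Prime, Real.log p) * ((1:ℝ)/m - 1/(m+1))
            ≤ (m * Real.log 4) * ((1:ℝ)/m - 1/(m+1)) :=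
              mul_le_mul_of_nonneg_right (theta_bd m) hg
          _ = Real.log 4 * (1/(m+1)) := by
              have h1 : (0:ℝ) < m := by positivity
              have h2 : (0:ℝ) < m + 1 := by positivity
              field_simp
              ring
    calc ∑ m ∈ range N, ∑ p ∈ A, (if p ≤ m then Real.log p * ((1:ℝ)/m - 1/(m+1)) else 0)
        ≤ ∑ m ∈ range N, Real.log 4 * (1/(m+1)) := Finset.sum_le_sum hterm
      _ = Real.log 4 * ∑ m ∈ range N, (1:ℝ)/(m+1) := by rw [Finset.mul_sum]
      _ ≤ Real.log 4 * (1 + Real.log N) := by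
          apply mul_le_mul_of_nonneg_left _ (Real.log_nonneg (by norm_num))
          have : ∑ m ∈ range N, (1:ℝ)/(m+1) = ((harmonic N : ℚ) : ℝ) := by
            rw [harmonic]; push_cast; simp [one_div]
          rw [this]
          exact_mod_cast harmonic_le_one_add_log N
  rw [step1]
  linarith

lemma sum_inv_primes (X : ℝ) (hX : 2 ≤ X) :
    ∑ p ∈ (range (⌊X⌋₊+1)).filter (fun p => Nat.Prime p ∧ X^((1:ℝ)/4) < (p:ℝ)), (1:ℝ)/p
      ≤ 24 := by
  set N := ⌊X⌋₊ with hNdef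
  have hN2 : 2 ≤ N := Nat.le_floor (by exact_mod_cast hX)
  have hNX : (N:ℝ) ≤ X := Nat.floor_le (by linarith)
  have hlog2 : (0:ℝ) < Real.log 2 := Real.log_pos (by norm_num)
  have hlogX : Real.log 2 ≤ Real.log X := Real.log_le_log (by norm_num) hX
  have hlogX0 : (0:ℝ) < Real.log X := lt_of_lt_of_le hlog2 hlogX
  have key : ∀ p ∈ (range (N+1)).filter (fun p => Nat.Prime p ∧ X^((1:ℝ)/4) < (p:ℝ)),
      (1:ℝ)/p ≤ (4/Real.log X) * (Real.log p / p) := by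
    intro p hp
    rw [mem_filter] at hp
    obtain ⟨-, hprime, hplarge⟩ := hp
    have hp0 : (0:ℝ) < p := by exact_mod_cast hprime.pos
    have hX4 : (0:ℝ) < X^((1:ℝ)/4) := Real.rpow_pos_of_pos (by linarith) _
    have hlogp : Real.log X / 4 < Real.log p := by
      have := Real.log_lt_log hX4 hplarge
      rwa [Real.log_rpow (by linarith), one_div, inv_mul_eq_div] at this
    rw [div_mul_div_comm, le_div_iff₀ (by positivity), one_div, inv_mul_eq_div,
      mul_div_assoc, div_self (ne_of_gt hp0), mul_one]
    nlinarith
  calc ∑ p ∈ (range (N+1)).filter (fun p => Nat.Prime p ∧ X^((1:ℝ)/4) < (p:ℝ)), (1:ℝ)/p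
      ≤ ∑ p ∈ (range (N+1)).filter (fun p => Nat.Prime p ∧ X^((1:ℝ)/4) < (p:ℝ)),
          (4/Real.log X) * (Real.log p / p) := Finset.sum_le_sum key
    _ ≤ ∑ p ∈ (range (N+1)).filter Nat.Prime, (4/Real.log X) * (Real.log p / p) := by
        apply Finset.sum_le_sum_of_subset_of_nonneg
        · intro p hp; rw [mem_filter] at *; exact ⟨hp.1, hp.2.1⟩
        · intro p hp _
          rw [mem_filter] at hp
          have h1 : (1:ℝ) ≤ p := by exact_mod_cast hp.2.one_lt.le
          have := Real.log_nonneg h1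
          positivity
    _ = (4/Real.log X) * ∑ p ∈ (range (N+1)).filter Nat.Prime, Real.log p / p := by
        rw [Finset.mul_sum]
    _ ≤ (4/Real.log X) * (Real.log 4 * (2 + Real.log N)) := by
        apply mul_le_mul_of_nonneg_left (logpp_bd N (by omega)) (by positivity)
    _ ≤ (4/Real.log X) * (Real.log 4 * (2 + Real.log X)) := by
        apply mul_le_mul_of_nonneg_left _ (by positivity)
        apply mul_le_mul_of_nonneg_left _ (Real.log_nonneg (by norm_num))
        have : Real.log N ≤ Real.log X := Real.log_le_log (by positivity) hNX
        linarith
    _ ≤ 24 := by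
        have h4 : Real.log 4 = 2 * Real.log 2 := by
          rw [show (4:ℝ) = 2^2 by norm_num, Real.log_pow]; push_cast; ring
        rw [div_mul_eq_mul_div, div_le_iff₀ hlogX0, h4]
        have hd9 : Real.log 2 < 0.6931471808 := Real.log_two_lt_d9
        nlinarith

lemma card_bigPF (X : ℝ) (hX : 2 ≤ X) (n : ℕ) (hn : 1 ≤ n) (hnX : (n:ℝ) ≤ X) :
    (n.primeFactors.filter (fun p : ℕ => X^((1:ℝ)/4) < (p:ℝ))).card ≤ 3 := by
  set Q := n.primeFactors.filter (fun p : ℕ => X^((1:ℝ)/4) < (p:ℝ)) with hQ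
  by_contra hcon
  push_neg at hcon
  obtain ⟨Q4, hsub, hcard⟩ := Finset.exists_subset_card_eq (show 4 ≤ Q.card by omega)
  have hdvd : ∏ p ∈ Q4, p ∣ n := by
    refine dvd_trans ?_ (Nat.prod_primeFactors_dvd n)
    exact Finset.prod_dvd_prod_of_subset _ _ _ (hsub.trans (Finset.filter_subset _ _))
  have hle : ((∏ p ∈ Q4, p : ℕ) : ℝ) ≤ X := le_trans (by exact_mod_cast Nat.le_of_dvd hn hdvd) hnX
  have hX4 : (0:ℝ) < X^((1:ℝ)/4) := Real.rpow_pos_of_pos (by linarith) _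
  have hbig : ∀ p ∈ Q4, X^((1:ℝ)/4) < (p:ℝ) := by
    intro p hp
    exact (Finset.mem_filter.mp (hsub hp)).2
  obtain ⟨p0, hp0⟩ : Q4.Nonempty := Finset.card_pos.mp (by omega)
  have herase : ((∏ p ∈ Q4, p : ℕ) : ℝ) = (p0:ℝ) * ∏ p ∈ Q4.erase p0, (p:ℝ) := by
    push_cast
    rw [← Finset.mul_prod_erase _ _ hp0]
  have h3 : (X^((1:ℝ)/4))^3 ≤ ∏ p ∈ Q4.erase p0, (p:ℝ) := by
    have := Finset.prod_le_prod (s := Q4.erase p0) (f := fun _ : ℕ => X^((1:ℝ)/4))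
      (g := fun p : ℕ => (p:ℝ)) (fun _ _ => hX4.le)
      (fun p hp => (hbig p (Finset.mem_of_mem_erase hp)).le)
    rwa [Finset.prod_const, Finset.card_erase_of_mem hp0, hcard] at this
  have hXeq : (X^((1:ℝ)/4)) * (X^((1:ℝ)/4))^3 = X := by
    rw [← pow_succ']
    rw [← Real.rpow_natCast (X^((1:ℝ)/4)) 4, ← Real.rpow_mul (by linarith)]
    norm_num
  have : X < ((∏ p ∈ Q4, p : ℕ) : ℝ) := by
    rw [herase, ← hXeq]
    have hp0big := hbig p0 hp0
    have hprodpos : (0:ℝ) < ∏ p ∈ Q4.erase p0, (p:ℝ) := lt_of_lt_of_le (by positivity) h3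
    calc X^((1:ℝ)/4) * (X^((1:ℝ)/4))^3 ≤ X^((1:ℝ)/4) * ∏ p ∈ Q4.erase p0, (p:ℝ) := by
          exact mul_le_mul_of_nonneg_left h3 hX4.le
      _ < (p0:ℝ) * ∏ p ∈ Q4.erase p0, (p:ℝ) := by
          exact mul_lt_mul_of_pos_right hp0big hprodpos
  linarith

lemma pair_count (X : ℝ) (hX : 2 ≤ X) (n : ℕ) (hn : 1 ≤ n) (hnX : (n:ℝ) ≤ X) (s : Finset (ℕ × ℕ)) :
    (s.filter (fun pq : ℕ × ℕ => (pq.1.Prime ∧ pq.2.Prime ∧ pq.1 ≠ pq.2 ∧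
        X ^ ((1 : ℝ) / 4) < (pq.1 : ℝ) ∧ X ^ ((1 : ℝ) / 4) < (pq.2 : ℝ)) ∧
        pq.1 * pq.2 ∣ n)).card ≤ 9 := by
  set Q := n.primeFactors.filter (fun p : ℕ => X^((1:ℝ)/4) < (p:ℝ)) with hQ
  have hsub : s.filter (fun pq : ℕ × ℕ => (pq.1.Prime ∧ pq.2.Prime ∧ pq.1 ≠ pq.2 ∧
        X ^ ((1 : ℝ) / 4) < (pq.1 : ℝ) ∧ X ^ ((1 : ℝ) / 4) < (pq.2 : ℝ)) ∧
        pq.1 * pq.2 ∣ n) ⊆ Q ×ˢ Q := by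
    intro pq hpq
    rw [Finset.mem_filter] at hpq
    obtain ⟨-, ⟨hp, hq, -, hp4, hq4⟩, hdvd⟩ := hpq
    have hn0 : n ≠ 0 := by omega
    rw [Finset.mem_product, hQ, Finset.mem_filter, Finset.mem_filter,
      Nat.mem_primeFactors, Nat.mem_primeFactors]
    exact ⟨⟨⟨hp, (dvd_mul_right _ _).trans hdvd, hn0⟩, hp4⟩,
      ⟨⟨hq, (dvd_mul_left _ _).trans hdvd, hn0⟩, hq4⟩⟩
  calc _ ≤ (Q ×ˢ Q).card := Finset.card_le_card hsub
    _ = Q.card * Q.card := Finset.card_product _ _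
    _ ≤ 3 * 3 := Nat.mul_le_mul (card_bigPF X hX n hn hnX) (card_bigPF X hX n hn hnX)
    _ = 9 := rfl
-- Cauchy-Schwarz for complex sums
lemma cs_bound (s : Finset ℕ) (a : ℕ → ℂ) :
    ‖∑ n ∈ s, a n‖^2 ≤ (s.card : ℝ) * ∑ n ∈ s, ‖a n‖^2 := by
  have h1 : ‖∑ n ∈ s, a n‖ ≤ ∑ n ∈ s, ‖a n‖ := norm_sum_le _ _
  have h2 : (∑ n ∈ s, ‖a n‖)^2 ≤ (∑ n ∈ s, (1:ℝ)^2) * ∑ n ∈ s, ‖a n‖^2 := by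
    have := Finset.sum_mul_sq_le_sq_mul_sq s (fun _ => (1:ℝ)) (fun n => ‖a n‖)
    simpa using this
  have h3 : ∑ n ∈ s, (1:ℝ)^2 = (s.card : ℝ) := by simp
  calc ‖∑ n ∈ s, a n‖^2 ≤ (∑ n ∈ s, ‖a n‖)^2 := by
        apply pow_le_pow_left₀ (norm_nonneg _) h1
    _ ≤ (s.card : ℝ) * ∑ n ∈ s, ‖a n‖^2 := h3 ▸ h2

theorem stmt6 :
    ∃ C : ℝ, 0 < C ∧ ∀ (a : ℕ → ℂ) (X : ℝ), 2 ≤ X →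
      ∑ pq ∈ ((Finset.Icc 1 ⌊X⌋₊ ×ˢ Finset.Icc 1 ⌊X⌋₊).filter
          (fun pq : ℕ × ℕ => pq.1.Prime ∧ pq.2.Prime ∧ pq.1 ≠ pq.2 ∧
            X ^ ((1 : ℝ) / 4) < (pq.1 : ℝ) ∧ X ^ ((1 : ℝ) / 4) < (pq.2 : ℝ))),
        (pq.1 * pq.2 : ℝ) *
          ‖(∑ n ∈ (Finset.Icc 1 ⌊X⌋₊).filter (fun n => pq.1 * pq.2 ∣ n), a n)
            - (1 / ((pq.1 : ℂ) * (pq.2 : ℂ))) * ∑ n ∈ Finset.Icc 1 ⌊X⌋₊, a n‖ ^ 2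
        ≤ C * X * ∑ n ∈ Finset.Icc 1 ⌊X⌋₊, ‖a n‖ ^ 2 := by
  refine ⟨1170, by norm_num, fun a X hX => ?_⟩
  set N := ⌊X⌋₊ with hNdef
  set I : Finset ℕ := Finset.Icc 1 N with hIdef
  set cond : ℕ × ℕ → Prop := fun pq => pq.1.Prime ∧ pq.2.Prime ∧ pq.1 ≠ pq.2 ∧
      X ^ ((1 : ℝ) / 4) < (pq.1 : ℝ) ∧ X ^ ((1 : ℝ) / 4) < (pq.2 : ℝ) with hconddef
  set P : Finset (ℕ × ℕ) := (I ×ˢ I).filter cond with hPdef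
  set T : ℂ := ∑ n ∈ I, a n with hTdef
  set Sa : ℝ := ∑ n ∈ I, ‖a n‖^2 with hSadef
  have hX0 : (0:ℝ) < X := by linarith
  have hNX : (N:ℝ) ≤ X := Nat.floor_le hX0.le
  have hSa0 : 0 ≤ Sa := Finset.sum_nonneg fun n _ => by positivity
  have hcardI : (I.card : ℝ) = N := by rw [hIdef, Nat.card_Icc]; push_cast; ring
  -- pointwise split
  have hsplit : ∀ pq ∈ P,
      ((pq.1 * pq.2 : ℕ) : ℝ) * ‖(∑ n ∈ I.filter (fun n => pq.1 * pq.2 ∣ n), a n)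
          - (1 / ((pq.1 : ℂ) * (pq.2 : ℂ))) * T‖ ^ 2
        ≤ 2 * ((pq.1 * pq.2 : ℕ) : ℝ) * ‖∑ n ∈ I.filter (fun n => pq.1 * pq.2 ∣ n), a n‖^2
          + 2 * ‖T‖^2 / ((pq.1 * pq.2 : ℕ) : ℝ) := by
    intro pq hpq
    rw [hPdef, Finset.mem_filter] at hpq
    obtain ⟨-, hp, hq, -, -, -⟩ := hpq
    set k : ℕ := pq.1 * pq.2 with hk
    have hk0 : (0:ℝ) < (k:ℝ) := by
      have := Nat.mul_pos hp.pos hq.pos; exact_mod_cast this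
    set S : ℂ := ∑ n ∈ I.filter (fun n => pq.1 * pq.2 ∣ n), a n with hS
    have hnorm : ‖(1 / ((pq.1 : ℂ) * (pq.2 : ℂ))) * T‖ = ‖T‖ / (k:ℝ) := by
      rw [norm_mul, norm_div, norm_one]
      rw [norm_mul, Complex.norm_natCast, Complex.norm_natCast]
      rw [hk]
      push_cast
      ring
    have h1 : ‖S - (1 / ((pq.1 : ℂ) * (pq.2 : ℂ))) * T‖^2
        ≤ 2*‖S‖^2 + 2*(‖T‖/(k:ℝ))^2 := by
      have hle := norm_sub_le S ((1 / ((pq.1 : ℂ) * (pq.2 : ℂ))) * T)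
      rw [hnorm] at hle
      have hsq : ‖S - (1 / ((pq.1 : ℂ) * (pq.2 : ℂ))) * T‖^2 ≤ (‖S‖ + ‖T‖/(k:ℝ))^2 :=
        pow_le_pow_left₀ (norm_nonneg _) hle 2
      nlinarith [sq_nonneg (‖S‖ - ‖T‖/(k:ℝ))]
    calc ((k:ℕ):ℝ) * ‖S - (1 / ((pq.1 : ℂ) * (pq.2 : ℂ))) * T‖^2
        ≤ (k:ℝ) * (2*‖S‖^2 + 2*(‖T‖/(k:ℝ))^2) := by
          exact mul_le_mul_of_nonneg_left h1 hk0.le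
      _ = 2 * (k:ℝ) * ‖S‖^2 + 2 * ‖T‖^2 / (k:ℝ) := by field_simp
  -- Part A pointwise
  have hA1 : ∀ pq ∈ P, 2 * ((pq.1 * pq.2 : ℕ) : ℝ) *
        ‖∑ n ∈ I.filter (fun n => pq.1 * pq.2 ∣ n), a n‖^2
      ≤ 2 * X * ∑ n ∈ I.filter (fun n => pq.1 * pq.2 ∣ n), ‖a n‖^2 := by
    intro pq hpq
    rw [hPdef, Finset.mem_filter] at hpq
    obtain ⟨-, hp, hq, -, -, -⟩ := hpq
    set k : ℕ := pq.1 * pq.2 with hk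
    set D : Finset ℕ := I.filter (fun n => k ∣ n) with hD
    have hcard : D.card = N / k := by
      rw [hD, hIdef, show Finset.Icc 1 N = Finset.Ioc 0 N from rfl]
      exact Nat.Ioc_filter_dvd_card_eq_div N k
    have hCS := cs_bound D a
    have hkd : (k:ℝ) * (D.card : ℝ) ≤ X := by
      rw [hcard]
      have h1 : k * (N / k) ≤ N := by
        rw [mul_comm]; exact Nat.div_mul_le_self N k
      calc (k:ℝ) * ((N/k : ℕ):ℝ) = ((k * (N/k) : ℕ) : ℝ) := by push_cast; ring
        _ ≤ (N:ℝ) := by exact_mod_cast h1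
        _ ≤ X := hNX
    have hDs : (0:ℝ) ≤ ∑ n ∈ D, ‖a n‖^2 := Finset.sum_nonneg fun n _ => by positivity
    have hk0 : (0:ℝ) ≤ (k:ℝ) := by positivity
    calc 2 * ((k:ℕ):ℝ) * ‖∑ n ∈ D, a n‖^2
        ≤ 2 * ((k:ℝ) * ((D.card : ℝ) * ∑ n ∈ D, ‖a n‖^2)) := by
          rw [mul_assoc]
          exact mul_le_mul_of_nonneg_left (mul_le_mul_of_nonneg_left hCS hk0) (by norm_num)
      _ = 2 * ((k:ℝ) * (D.card : ℝ)) * ∑ n ∈ D, ‖a n‖^2 := by ring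
      _ ≤ 2 * X * ∑ n ∈ D, ‖a n‖^2 := by
          apply mul_le_mul_of_nonneg_right _ hDs
          exact mul_le_mul_of_nonneg_left hkd (by norm_num)
  -- Part A summed
  have hA : ∑ pq ∈ P, 2 * X * ∑ n ∈ I.filter (fun n => pq.1 * pq.2 ∣ n), ‖a n‖^2
      ≤ 18 * X * Sa := by
    have hrw : ∑ pq ∈ P, 2 * X * ∑ n ∈ I.filter (fun n => pq.1 * pq.2 ∣ n), ‖a n‖^2
        = 2 * X * ∑ n ∈ I, ((P.filter (fun pq => pq.1 * pq.2 ∣ n)).card : ℝ) * ‖a n‖^2 := by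
      rw [Finset.mul_sum]
      apply Eq.trans (Finset.sum_congr rfl (fun pq _ => by rw [Finset.sum_filter, Finset.mul_sum]))
      rw [Finset.sum_comm]
      refine Finset.sum_congr rfl fun n _ => ?_
      rw [← Finset.mul_sum]
      congr 1
      rw [← Finset.sum_filter, Finset.sum_const, nsmul_eq_mul]
    rw [hrw]
    have hcount : ∀ n ∈ I, ((P.filter (fun pq => pq.1 * pq.2 ∣ n)).card : ℝ) * ‖a n‖^2
        ≤ 9 * ‖a n‖^2 := by
      intro n hn
      rw [hIdef, Finset.mem_Icc] at hn
      have hnX : (n:ℝ) ≤ X := le_trans (by exact_mod_cast hn.2) hNX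
      have hc : (P.filter (fun pq => pq.1 * pq.2 ∣ n)).card ≤ 9 := by
        rw [hPdef, Finset.filter_filter]
        exact pair_count X hX n hn.1 hnX (I ×ˢ I)
      apply mul_le_mul_of_nonneg_right _ (by positivity)
      exact_mod_cast hc
    calc 2 * X * ∑ n ∈ I, ((P.filter (fun pq => pq.1 * pq.2 ∣ n)).card : ℝ) * ‖a n‖^2
        ≤ 2 * X * ∑ n ∈ I, 9 * ‖a n‖^2 := by
          apply mul_le_mul_of_nonneg_left (Finset.sum_le_sum hcount) (by positivity)
      _ = 18 * X * Sa := by rw [hSadef, ← Finset.mul_sum]; ring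
  -- Part B
  have hT2 : ‖T‖^2 ≤ X * Sa := by
    have h := cs_bound I a
    rw [hcardI] at h
    calc ‖T‖^2 ≤ (N:ℝ) * Sa := h
      _ ≤ X * Sa := mul_le_mul_of_nonneg_right hNX hSa0
  have hB : ∑ pq ∈ P, 2*‖T‖^2/(((pq.1*pq.2 : ℕ)):ℝ) ≤ 1152 * X * Sa := by
    set Pr := (range (N+1)).filter (fun p => Nat.Prime p ∧ X^((1:ℝ)/4) < (p:ℝ)) with hPr
    have hPsub : P ⊆ Pr ×ˢ Pr := by
      intro pq hpq
      rw [hPdef, Finset.mem_filter, Finset.mem_product, hIdef, Finset.mem_Icc,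
        Finset.mem_Icc] at hpq
      obtain ⟨⟨h1, h2⟩, hp, hq, -, hp4, hq4⟩ := hpq
      rw [Finset.mem_product, hPr, Finset.mem_filter, Finset.mem_filter,
        Finset.mem_range, Finset.mem_range]
      exact ⟨⟨by omega, hp, hp4⟩, ⟨by omega, hq, hq4⟩⟩
    have hstep : ∑ pq ∈ P, (1:ℝ)/((pq.1*pq.2:ℕ):ℝ)
        ≤ ∑ pq ∈ Pr ×ˢ Pr, (1:ℝ)/((pq.1*pq.2:ℕ):ℝ) :=
      Finset.sum_le_sum_of_subset_of_nonneg hPsub (fun pq _ _ => by positivity)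
    have hprod : ∑ pq ∈ Pr ×ˢ Pr, (1:ℝ)/((pq.1*pq.2:ℕ):ℝ)
        = (∑ p ∈ Pr, (1:ℝ)/p) * (∑ p ∈ Pr, (1:ℝ)/p) := by
      rw [Finset.sum_mul_sum, Finset.sum_product]
      refine Finset.sum_congr rfl fun p _ => Finset.sum_congr rfl fun q _ => ?_
      push_cast
      rw [div_mul_div_comm, one_mul]
    have h24 := sum_inv_primes X hX
    have hPr0 : 0 ≤ ∑ p ∈ Pr, (1:ℝ)/p := Finset.sum_nonneg fun p _ => by positivity
    have hinv : ∑ pq ∈ P, (1:ℝ)/((pq.1*pq.2:ℕ):ℝ) ≤ 576 := by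
      calc ∑ pq ∈ P, (1:ℝ)/((pq.1*pq.2:ℕ):ℝ)
          ≤ (∑ p ∈ Pr, (1:ℝ)/p) * (∑ p ∈ Pr, (1:ℝ)/p) := hstep.trans hprod.le
        _ ≤ 24 * 24 := mul_le_mul h24 h24 hPr0 (by norm_num)
        _ = 576 := by norm_num
    calc ∑ pq ∈ P, 2*‖T‖^2/(((pq.1*pq.2 : ℕ)):ℝ)
        = 2*‖T‖^2 * ∑ pq ∈ P, (1:ℝ)/((pq.1*pq.2:ℕ):ℝ) := by
          rw [Finset.mul_sum]
          exact Finset.sum_congr rfl fun pq _ => (mul_one_div _ _).symm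
      _ ≤ 2*‖T‖^2 * 576 := mul_le_mul_of_nonneg_left hinv (by positivity)
      _ = 1152 * ‖T‖^2 := by ring
      _ ≤ 1152 * (X*Sa) := by
          have := hT2
          nlinarith [hT2]
      _ = 1152 * X * Sa := by ring
  -- Final assembly
  calc ∑ pq ∈ P, ((pq.1 : ℝ) * (pq.2 : ℝ)) *
        ‖(∑ n ∈ I.filter (fun n => pq.1 * pq.2 ∣ n), a n)
          - (1 / ((pq.1 : ℂ) * (pq.2 : ℂ))) * T‖ ^ 2
      = ∑ pq ∈ P, ((pq.1 * pq.2 : ℕ) : ℝ) *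
        ‖(∑ n ∈ I.filter (fun n => pq.1 * pq.2 ∣ n), a n)
          - (1 / ((pq.1 : ℂ) * (pq.2 : ℂ))) * T‖ ^ 2 := by
        exact Finset.sum_congr rfl fun pq _ => by push_cast; ring
    _ ≤ ∑ pq ∈ P, (2 * ((pq.1 * pq.2 : ℕ) : ℝ) *
          ‖∑ n ∈ I.filter (fun n => pq.1 * pq.2 ∣ n), a n‖^2
          + 2 * ‖T‖^2 / ((pq.1 * pq.2 : ℕ) : ℝ)) := Finset.sum_le_sum hsplit
    _ = (∑ pq ∈ P, 2 * ((pq.1 * pq.2 : ℕ) : ℝ) *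
          ‖∑ n ∈ I.filter (fun n => pq.1 * pq.2 ∣ n), a n‖^2)
        + ∑ pq ∈ P, 2 * ‖T‖^2 / ((pq.1 * pq.2 : ℕ) : ℝ) := Finset.sum_add_distrib
    _ ≤ (∑ pq ∈ P, 2 * X * ∑ n ∈ I.filter (fun n => pq.1 * pq.2 ∣ n), ‖a n‖^2)
        + 1152 * X * Sa := add_le_add (Finset.sum_le_sum hA1) hB
    _ ≤ 18 * X * Sa + 1152 * X * Sa := add_le_add hA le_rfl
    _ = 1170 * X * Sa := by ring
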